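/- arXiv:1211.6083 — 4 statements merged into one kernel-verified Lean document; each statement's English description precedes it below -/
import Mathlib

section
/- Let d ≥ 2 and let f be a probability density on S^{d−1} with Q-tensor Q_f. Then every eigenvalue λ of Q_f satisfies the strict inequalities −1/d < λ < 1 − 1/d; i.e. Q_f is physical. -/
open MeasureTheory Matrix
open scoped Pointwise RealInnerProductSpace

noncomputable section

/-- The unit sphere `S^{d-1} ⊂ ℝ^d`. -/
abbrev Sph (d : ℕ) := Metric.sphere (0 : EuclideanSpace ℝ (Fin d)) 1

/-- The surface (spherical) measure `σ` on the unit sphere `S^{d-1}`. -/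
noncomputable def sphMeasure (d : ℕ) : Measure (Sph d) :=
  (volume : Measure (EuclideanSpace ℝ (Fin d))).toSphere

/-- The Q-tensor of a density `f` on the sphere:
`Q_f = ∫_{S^{d-1}} (ω ⊗ ω - (1/d) I) f(ω) dσ(ω)`, defined entrywise. -/
noncomputable def Qtensor (d : ℕ) (f : Sph d → ℝ) : Matrix (Fin d) (Fin d) ℝ :=
  Matrix.of fun i j =>
    ∫ ω : Sph d,
      ((ω : EuclideanSpace ℝ (Fin d)) i * (ω : EuclideanSpace ℝ (Fin d)) j
        - if i = j then (1 : ℝ) / d else 0) * f ω ∂(sphMeasure d)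

/-- A subset of the sphere contained in a proper linear subspace is `sphMeasure`-null. -/
lemma sphMeasure_null_of_submodule (d : ℕ) (W : Submodule ℝ (EuclideanSpace ℝ (Fin d)))
    (hW : W ≠ ⊤) (S : Set (Sph d)) (hS : ∀ ω ∈ S, (ω : EuclideanSpace ℝ (Fin d)) ∈ W) :
    sphMeasure d S = 0 := by
  have hWc : IsClosed (W : Set (EuclideanSpace ℝ (Fin d))) := W.closed_of_finiteDimensional
  set T : Set (Sph d) := Subtype.val ⁻¹' (W : Set (EuclideanSpace ℝ (Fin d))) with hT
  have hTm : MeasurableSet T := hWc.measurableSet.preimage measurable_subtype_coe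
  have h0 : sphMeasure d T = 0 := by
    rw [sphMeasure, Measure.toSphere_apply' _ hTm]
    have hsub : (Set.Ioo (0:ℝ) 1 • (Subtype.val '' T)) ⊆ (W : Set (EuclideanSpace ℝ (Fin d))) := by
      rintro x ⟨r, hr, y, hy, rfl⟩
      rcases hy with ⟨ω, hω, rfl⟩
      exact W.smul_mem r hω
    have hz : volume (Set.Ioo (0:ℝ) 1 • (Subtype.val '' T)) = 0 :=
      measure_mono_null hsub (Measure.addHaar_submodule volume W hW)
    simp [hz]
  exact measure_mono_null (fun ω hω => hS ω hω) h0

lemma double_sum_identity {n : ℕ} (a b : Fin n → ℝ) (t r : ℝ) :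
    ∑ i, ∑ j, (b i * b j) * ((a i * a j - if i = j then t else 0) * r)
      = ((∑ i, a i * b i) ^ 2 - (∑ i, b i * b i) * t) * r := by
  have h1 : ∀ i : Fin n, ∑ j, (b i * b j) * ((a i * a j - if i = j then t else 0) * r)
      = (a i * b i) * ((∑ j, a j * b j) * r) - (b i * b i) * (t * r) := by
    intro i
    have hterm : ∀ j, (b i * b j) * ((a i * a j - if i = j then t else 0) * r)
        = (a i * b i) * ((a j * b j) * r) - (if i = j then (b i * b i) * (t * r) else 0) := by
      intro j
      split_ifs with h
      · subst h; ring
      · ring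
    rw [Finset.sum_congr rfl (fun j _ => hterm j), Finset.sum_sub_distrib,
      ← Finset.mul_sum, ← Finset.sum_mul, Finset.sum_ite_eq, if_pos (Finset.mem_univ i)]
  rw [Finset.sum_congr rfl (fun i _ => h1 i), Finset.sum_sub_distrib,
    ← Finset.sum_mul, ← Finset.sum_mul]
  ring

set_option maxHeartbeats 1000000 in
/-- If `f` is a probability density on `S^{d-1}` (`d ≥ 2`) with Q-tensor
`Q_f`, then every eigenvalue `λ` of `Q_f` satisfies `-1/d < λ < 1 - 1/d`,
i.e. `Q_f` is physical. -/
theorem qtensor_physical (d : ℕ) (hd : 2 ≤ d) (f : Sph d → ℝ)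
    (hf_int : Integrable f (sphMeasure d)) (hf_nonneg : ∀ ω, 0 ≤ f ω)
    (hf_mass : ∫ ω, f ω ∂(sphMeasure d) = 1)
    (lam : ℝ) (v : Fin d → ℝ) (hv : v ≠ 0)
    (heig : (Qtensor d f).mulVec v = lam • v) :
    -(1 / d) < lam ∧ lam < 1 - 1 / d := by
  classical
  have hd2 : (2:ℝ) ≤ (d:ℝ) := by exact_mod_cast hd
  have hdpos : (0:ℝ) < (d:ℝ) := by linarith
  set V : EuclideanSpace ℝ (Fin d) := (WithLp.equiv 2 (Fin d → ℝ)).symm v with hVdef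
  have hVi : ∀ i, V i = v i := fun _ => rfl
  have hV0 : V ≠ 0 := by
    intro h
    apply hv
    funext i
    show v i = 0
    have h2 : V i = 0 := by rw [h]; rfl
    rw [← hVi i, h2]
  set nv : ℝ := ‖V‖ ^ 2 with hnv
  have hnvpos : 0 < nv := by
    have := norm_pos_iff.mpr hV0
    positivity
  have hnvsum : nv = ∑ i, v i * v i := by
    rw [hnv, EuclideanSpace.norm_eq, Real.sq_sqrt (by positivity)]
    refine Finset.sum_congr rfl fun i _ => ?_
    rw [Real.norm_eq_abs, sq_abs, hVi, sq]
  set c : Sph d → ℝ := fun ω => (inner ℝ (ω : EuclideanSpace ℝ (Fin d)) V : ℝ) with hcdef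
  have hc_cont : Continuous c := Continuous.inner continuous_subtype_val continuous_const
  have hnormω : ∀ ω : Sph d, ‖(ω : EuclideanSpace ℝ (Fin d))‖ = 1 := fun ω => by
    simpa using mem_sphere_zero_iff_norm.mp ω.2
  have hc_abs : ∀ ω, |c ω| ≤ ‖V‖ := fun ω => by
    have h := abs_real_inner_le_norm ((ω : EuclideanSpace ℝ (Fin d))) V
    rwa [hnormω ω, one_mul] at h
  have hc_sq : ∀ ω, c ω ^ 2 ≤ nv := fun ω => by
    have h := hc_abs ω
    nlinarith [sq_abs (c ω), abs_nonneg (c ω), norm_nonneg V]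
  have hc_sum : ∀ ω : Sph d, c ω = ∑ i, (ω : EuclideanSpace ℝ (Fin d)) i * v i := by
    intro ω
    simp [hcdef, PiLp.inner_apply, RCLike.inner_apply, hVi]
    exact Finset.sum_congr rfl fun i _ => mul_comm _ _
  -- coordinates squared are at most 1
  have hcoord_sq : ∀ (ω : Sph d) (i : Fin d), ((ω : EuclideanSpace ℝ (Fin d)) i)^2 ≤ 1 := by
    intro ω i
    have hsum : ∑ j, ((ω : EuclideanSpace ℝ (Fin d)) j)^2 = 1 := by
      have h := EuclideanSpace.norm_eq ((ω : EuclideanSpace ℝ (Fin d)))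
      rw [hnormω ω] at h
      have h2 : Real.sqrt (∑ j, ‖(ω : EuclideanSpace ℝ (Fin d)) j‖^2) = 1 := h.symm
      have h3 := Real.sqrt_eq_one.mp h2
      simpa [Real.norm_eq_abs, sq_abs] using h3
    calc ((ω : EuclideanSpace ℝ (Fin d)) i)^2
        ≤ ∑ j, ((ω : EuclideanSpace ℝ (Fin d)) j)^2 :=
          Finset.single_le_sum (f := fun j => ((ω : EuclideanSpace ℝ (Fin d)) j)^2)
            (fun j _ => sq_nonneg _) (Finset.mem_univ i)
      _ = 1 := hsum
  have hcoord_cont : ∀ i : Fin d, Continuous fun ω : Sph d => (ω : EuclideanSpace ℝ (Fin d)) i := by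
    intro i
    exact (continuous_apply i).comp
      ((PiLp.continuous_ofLp (p := 2) (β := fun _ : Fin d => ℝ)).comp continuous_subtype_val)
  -- integrability of the matrix entry integrands
  have hgint : ∀ i j : Fin d, Integrable (fun ω : Sph d =>
      ((ω : EuclideanSpace ℝ (Fin d)) i * (ω : EuclideanSpace ℝ (Fin d)) j
        - if i = j then (1:ℝ)/d else 0) * f ω) (sphMeasure d) := by
    intro i j
    apply hf_int.bdd_mul (c := 2)
    · exact (((hcoord_cont i).mul (hcoord_cont j)).sub continuous_const).aestronglyMeasurable
    · refine Filter.Eventually.of_forall fun ω => ?_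
      have h1 := hcoord_sq ω i
      have h2 := hcoord_sq ω j
      have hden : 0 ≤ (1:ℝ)/d := by positivity
      have hden1 : (1:ℝ)/d ≤ 1 := by rw [div_le_one hdpos]; linarith
      rw [Real.norm_eq_abs, abs_le]
      constructor <;> split_ifs <;>
        nlinarith [sq_nonneg ((ω : EuclideanSpace ℝ (Fin d)) i + (ω : EuclideanSpace ℝ (Fin d)) j),
          sq_nonneg ((ω : EuclideanSpace ℝ (Fin d)) i - (ω : EuclideanSpace ℝ (Fin d)) j)]
  have hIc2 : Integrable (fun ω => c ω^2 * f ω) (sphMeasure d) := by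
    apply hf_int.bdd_mul (c := nv) (hc_cont.pow 2).aestronglyMeasurable
    exact Filter.Eventually.of_forall fun ω => by
      rw [Real.norm_eq_abs, abs_of_nonneg (sq_nonneg _)]; exact hc_sq ω
  -- the key scalar identity
  set I1 : ℝ := ∫ ω, c ω^2 * f ω ∂(sphMeasure d) with hI1def
  have hkey : lam * nv = I1 - nv/d := by
    have hL : ∑ i, v i * ((Qtensor d f).mulVec v i) = lam * nv := by
      rw [heig, hnvsum, Finset.mul_sum]
      refine Finset.sum_congr rfl fun i _ => ?_
      simp [smul_eq_mul]
      ring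
    have hQ : ∀ i j, Qtensor d f i j = ∫ ω, (((ω : EuclideanSpace ℝ (Fin d)) i
        * (ω : EuclideanSpace ℝ (Fin d)) j - if i = j then (1:ℝ)/d else 0) * f ω)
        ∂(sphMeasure d) := fun i j => rfl
    have hexp : ∑ i, v i * ((Qtensor d f).mulVec v i)
        = ∫ ω, (∑ i, ∑ j, (v i * v j) * (((ω : EuclideanSpace ℝ (Fin d)) i
            * (ω : EuclideanSpace ℝ (Fin d)) j - if i = j then (1:ℝ)/d else 0) * f ω))
          ∂(sphMeasure d) := by
      rw [integral_finset_sum _ (fun i _ => integrable_finset_sum _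
        (fun j _ => ((hgint i j).const_mul _)))]
      refine Finset.sum_congr rfl fun i _ => ?_
      rw [integral_finset_sum _ (fun j _ => ((hgint i j).const_mul _))]
      rw [Matrix.mulVec, dotProduct, Finset.mul_sum]
      refine Finset.sum_congr rfl fun j _ => ?_
      have hvv : v i * (Qtensor d f i j * v j) = (v i * v j) * Qtensor d f i j := by ring
      rw [hvv, hQ, ← integral_const_mul]
    have hpt : ∀ ω : Sph d, (∑ i, ∑ j, (v i * v j) * (((ω : EuclideanSpace ℝ (Fin d)) i
          * (ω : EuclideanSpace ℝ (Fin d)) j - if i = j then (1:ℝ)/d else 0) * f ω))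
        = c ω^2 * f ω - (nv/d) * f ω := by
      intro ω
      rw [double_sum_identity (fun i => (ω : EuclideanSpace ℝ (Fin d)) i) v ((1:ℝ)/d) (f ω),
        ← hc_sum ω, ← hnvsum]
      ring
    have hsplit : (∫ ω, (∑ i, ∑ j, (v i * v j) * (((ω : EuclideanSpace ℝ (Fin d)) i
          * (ω : EuclideanSpace ℝ (Fin d)) j - if i = j then (1:ℝ)/d else 0) * f ω))
          ∂(sphMeasure d)) = I1 - nv/d := by
      rw [integral_congr_ae (Filter.Eventually.of_forall hpt),
        integral_sub hIc2 (hf_int.const_mul _), integral_const_mul, hf_mass, mul_one]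
    rw [← hL, hexp, hsplit]
  -- the integrand is nonnegative
  have hI1nonneg : 0 ≤ I1 :=
    integral_nonneg fun ω => mul_nonneg (sq_nonneg _) (hf_nonneg ω)
  -- lower bound : I1 > 0
  have hI1pos : 0 < I1 := by
    rcases hI1nonneg.lt_or_eq with h | h
    · exact h
    exfalso
    have hz : (fun ω => c ω^2 * f ω) =ᵐ[sphMeasure d] 0 :=
      (integral_eq_zero_iff_of_nonneg
        (fun ω => mul_nonneg (sq_nonneg _) (hf_nonneg ω)) hIc2).mp h.symm
    have hN : sphMeasure d {ω : Sph d | c ω = 0} = 0 := by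
      apply sphMeasure_null_of_submodule d (LinearMap.ker (innerSL ℝ V : EuclideanSpace ℝ (Fin d) →ₗ[ℝ] ℝ))
      · intro htop
        have hVin : V ∈ LinearMap.ker (innerSL ℝ V : EuclideanSpace ℝ (Fin d) →ₗ[ℝ] ℝ) := htop ▸ Submodule.mem_top (x := V)
        have h0 : (inner ℝ V V : ℝ) = 0 := by simpa using LinearMap.mem_ker.mp hVin
        exact hV0 (inner_self_eq_zero.mp h0)
      · intro ω hω
        simp only [Set.mem_setOf_eq] at hω
        refine LinearMap.mem_ker.mpr ?_
        have hω' : (inner ℝ V (ω : EuclideanSpace ℝ (Fin d)) : ℝ) = 0 := by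
          rw [real_inner_comm]; exact hω
        simpa using hω'
    have hfz : f =ᵐ[sphMeasure d] 0 := by
      have hcz : ∀ᵐ ω ∂(sphMeasure d), c ω ≠ 0 := by
        rw [ae_iff]
        simpa using hN
      filter_upwards [hz, hcz] with ω h1 h2
      rcases mul_eq_zero.mp h1 with h | h
      · exact absurd ((pow_eq_zero_iff two_ne_zero).mp h) h2
      · exact h
    rw [integral_congr_ae hfz] at hf_mass
    simp at hf_mass
  -- upper bound : I1 < nv
  have hI2int : Integrable (fun ω => (nv - c ω^2) * f ω) (sphMeasure d) := by
    apply hf_int.bdd_mul (c := nv) (continuous_const.sub (hc_cont.pow 2)).aestronglyMeasurable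
    refine Filter.Eventually.of_forall fun ω => ?_
    show ‖nv - c ω ^ 2‖ ≤ nv
    rw [Real.norm_eq_abs, abs_of_nonneg (by nlinarith [hc_sq ω])]
    nlinarith [sq_nonneg (c ω)]
  have hI2val : (∫ ω, (nv - c ω^2) * f ω ∂(sphMeasure d)) = nv - I1 := by
    have hpt : ∀ ω, (nv - c ω^2) * f ω = nv * f ω - c ω^2 * f ω := fun ω => by ring
    rw [integral_congr_ae (Filter.Eventually.of_forall hpt),
      integral_sub (hf_int.const_mul _) hIc2, integral_const_mul, hf_mass, mul_one]
  have hI1lt : I1 < nv := by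
    have hnonneg : 0 ≤ ∫ ω, (nv - c ω^2) * f ω ∂(sphMeasure d) :=
      integral_nonneg fun ω => mul_nonneg (by nlinarith [hc_sq ω]) (hf_nonneg ω)
    rcases hnonneg.lt_or_eq with h | h
    · nlinarith [hI2val]
    exfalso
    have hz : (fun ω => (nv - c ω^2) * f ω) =ᵐ[sphMeasure d] 0 :=
      (integral_eq_zero_iff_of_nonneg
        (fun ω => mul_nonneg (by nlinarith [hc_sq ω]) (hf_nonneg ω)) hI2int).mp h.symm
    have hN : sphMeasure d {ω : Sph d | c ω^2 = nv} = 0 := by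
      apply sphMeasure_null_of_submodule d (Submodule.span ℝ {V})
      · intro htop
        have h1 : Module.finrank ℝ (Submodule.span ℝ ({V} : Set (EuclideanSpace ℝ (Fin d)))) = 1 :=
          finrank_span_singleton hV0
        rw [htop, finrank_top, finrank_euclideanSpace_fin] at h1
        omega
      · intro ω hω
        simp only [Set.mem_setOf_eq] at hω
        have habs : |c ω| = ‖V‖ := by
          have h2 : c ω ^ 2 = ‖V‖ ^ 2 := hω
          have h3 := (sq_eq_sq_iff_abs_eq_abs _ _).mp h2
          rwa [abs_of_nonneg (norm_nonneg V)] at h3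
        have hdiv : |(inner ℝ (ω : EuclideanSpace ℝ (Fin d)) V : ℝ) / (‖(ω : EuclideanSpace ℝ (Fin d))‖ * ‖V‖)| = 1 := by
          rw [hnormω ω, one_mul, abs_div, abs_of_nonneg (norm_nonneg V)]
          rw [div_eq_one_iff_eq (norm_ne_zero_iff.mpr hV0)]
          exact habs
        obtain ⟨-, r, hr0, hrV⟩ :=
          (abs_real_inner_div_norm_mul_norm_eq_one_iff (ω : EuclideanSpace ℝ (Fin d)) V).mp hdiv
        refine Submodule.mem_span_singleton.mpr ⟨r⁻¹, ?_⟩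
        rw [hrV, smul_smul, inv_mul_cancel₀ hr0, one_smul]
    have hfz : f =ᵐ[sphMeasure d] 0 := by
      have hcz : ∀ᵐ ω ∂(sphMeasure d), c ω^2 ≠ nv := by
        rw [ae_iff]
        simpa using hN
      filter_upwards [hz, hcz] with ω h1 h2
      rcases mul_eq_zero.mp h1 with h | h
      · exact absurd (by linarith : c ω^2 = nv) h2
      · exact h
    rw [integral_congr_ae hfz] at hf_mass
    simp at hf_mass
  have h1 : (lam + 1/(d:ℝ)) * nv = I1 := by
    rw [add_mul, hkey]; ring
  have h2 : (1 - 1/(d:ℝ) - lam) * nv = nv - I1 := by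
    rw [sub_mul, sub_mul, hkey]; ring
  constructor
  · nlinarith [h1, hI1pos, hnvpos]
  · nlinarith [h2, hI1lt, hnvpos]
end
end

section
/- Let d ≥ 2. The Ball–Majumdar potential ψ is convex on Sym₀(d): for all Q₀, Q₁ ∈ Sym₀(d) and t ∈ [0,1], ψ((1−t)Q₀ + tQ₁) ≤ (1−t)ψ(Q₀) + tψ(Q₁) in ℝ ∪ {+∞}. In particular, the effective domain D(ψ) := {Q ∈ Sym₀(d) : ψ(Q) < ∞} is a convex subset of Sym₀(d). -/
open MeasureTheory Matrix

noncomputable section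

/-- The class `A_Q` of probability densities on the sphere whose Q-tensor is `Q`. -/
def densityClass (d : ℕ) (Q : Matrix (Fin d) (Fin d) ℝ) (ρ : Sph d → ℝ) : Prop :=
  Integrable ρ (sphMeasure d) ∧ (∀ ω, 0 ≤ ρ ω) ∧
    (∫ ω, ρ ω ∂(sphMeasure d)) = 1 ∧ Qtensor d ρ = Q

/-- The entropy `∫_{S^{d-1}} ρ log ρ dσ` of a density `ρ`. -/
noncomputable def entropy (d : ℕ) (ρ : Sph d → ℝ) : ℝ :=
  ∫ ω, ρ ω * Real.log (ρ ω) ∂(sphMeasure d)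

/-- The Ball–Majumdar singular potential
`ψ(Q) := inf { ∫ ρ log ρ dσ : ρ ∈ A_Q, ρ log ρ σ-integrable }`, valued in `ℝ ∪ {+∞}`
(realised as `EReal`, with `sInf ∅ = +∞`). -/
noncomputable def BMpsi (d : ℕ) (Q : Matrix (Fin d) (Fin d) ℝ) : EReal :=
  sInf { x : EReal | ∃ ρ : Sph d → ℝ, densityClass d Q ρ ∧
    Integrable (fun ω => ρ ω * Real.log (ρ ω)) (sphMeasure d) ∧ x = (entropy d ρ : EReal) }

instance (d : ℕ) : IsFiniteMeasure (sphMeasure d) := by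
  unfold sphMeasure; infer_instance

lemma BM_mul_log_lower {x : ℝ} (hx : 0 ≤ x) : -1 ≤ x * Real.log x := by
  rcases hx.eq_or_lt with h | h
  · simp [← h]
  · have h1 := Real.one_sub_inv_le_log_of_pos h
    have h2 : x * (1 - x⁻¹) ≤ x * Real.log x := mul_le_mul_of_nonneg_left h1 hx
    have h3 : x * (1 - x⁻¹) = x - 1 := by field_simp
    nlinarith

lemma BM_kernel_bdd (d : ℕ) (i j : Fin d) (ω : Sph d) :
    ‖(ω : EuclideanSpace ℝ (Fin d)) i * (ω : EuclideanSpace ℝ (Fin d)) j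
        - if i = j then (1 : ℝ) / d else 0‖ ≤ 2 := by
  have hnorm : ‖(ω : EuclideanSpace ℝ (Fin d))‖ = 1 := by simpa using ω.2
  have habs : ∀ k : Fin d, |(ω : EuclideanSpace ℝ (Fin d)) k| ≤ 1 := by
    intro k
    rw [← hnorm, EuclideanSpace.norm_eq, ← Real.sqrt_sq_eq_abs]
    apply Real.sqrt_le_sqrt
    have := Finset.single_le_sum (f := fun l => ‖(ω : EuclideanSpace ℝ (Fin d)) l‖ ^ 2)
      (fun l _ => sq_nonneg _) (Finset.mem_univ k)
    simpa [Real.norm_eq_abs, sq_abs] using this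
  have h1 : |(ω : EuclideanSpace ℝ (Fin d)) i * (ω : EuclideanSpace ℝ (Fin d)) j| ≤ 1 := by
    rw [abs_mul]
    calc |(ω : EuclideanSpace ℝ (Fin d)) i| * |(ω : EuclideanSpace ℝ (Fin d)) j|
        ≤ 1 * 1 := mul_le_mul (habs i) (habs j) (abs_nonneg _) zero_le_one
      _ = 1 := by ring
  have h2 : |if i = j then (1 : ℝ) / d else 0| ≤ 1 := by
    split
    · rw [abs_of_nonneg (by positivity)]
      rcases Nat.eq_zero_or_pos d with h | h
      · simp [h]
      · rw [div_le_one (by exact_mod_cast h)]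
        exact_mod_cast h
    · simp
  rw [Real.norm_eq_abs]
  calc |_ - _| ≤ |(ω : EuclideanSpace ℝ (Fin d)) i * (ω : EuclideanSpace ℝ (Fin d)) j|
        + |if i = j then (1 : ℝ) / d else 0| := abs_sub _ _
    _ ≤ 1 + 1 := add_le_add h1 h2
    _ = 2 := by ring

lemma BM_kernel_int (d : ℕ) (i j : Fin d) {ρ : Sph d → ℝ}
    (hρ : Integrable ρ (sphMeasure d)) :
    Integrable (fun ω : Sph d =>
      ((ω : EuclideanSpace ℝ (Fin d)) i * (ω : EuclideanSpace ℝ (Fin d)) j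
        - if i = j then (1 : ℝ) / d else 0) * ρ ω) (sphMeasure d) := by
  apply hρ.bdd_mul (c := 2)
  · apply Continuous.aestronglyMeasurable
    have hc : ∀ k : Fin d, Continuous fun ω : Sph d => (ω : EuclideanSpace ℝ (Fin d)) k :=
      fun k => (EuclideanSpace.proj k).continuous.comp continuous_subtype_val
    exact ((hc i).mul (hc j)).sub continuous_const
  · exact ae_of_all _ (BM_kernel_bdd d i j)

/-- Lower bound on `BMpsi`. -/
lemma BMpsi_ne_bot (d : ℕ) (Q : Matrix (Fin d) (Fin d) ℝ) : BMpsi d Q ≠ ⊥ := by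
  have hlow : ((-(sphMeasure d Set.univ).toReal : ℝ) : EReal) ≤ BMpsi d Q := by
    apply le_sInf
    rintro x ⟨ρ, hρ, hint, rfl⟩
    rw [EReal.coe_le_coe_iff]
    have : ∫ ω, (-1 : ℝ) ∂(sphMeasure d) ≤ entropy d ρ := by
      apply integral_mono (integrable_const _) hint
      intro ω
      exact BM_mul_log_lower (hρ.2.1 ω)
    simpa [smul_eq_mul, measureReal_def] using this
  intro h
  rw [h] at hlow
  exact (EReal.bot_lt_coe _).not_ge hlow

/-- The mixture construction. -/
lemma BM_mix (d : ℕ) (Q₀ Q₁ : Matrix (Fin d) (Fin d) ℝ) (t : ℝ) (ht0 : 0 ≤ t) (ht1 : t ≤ 1)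
    (ρ₀ ρ₁ : Sph d → ℝ) (h₀ : densityClass d Q₀ ρ₀) (h₁ : densityClass d Q₁ ρ₁)
    (hi₀ : Integrable (fun ω => ρ₀ ω * Real.log (ρ₀ ω)) (sphMeasure d))
    (hi₁ : Integrable (fun ω => ρ₁ ω * Real.log (ρ₁ ω)) (sphMeasure d)) :
    ∃ ρ : Sph d → ℝ, densityClass d ((1 - t) • Q₀ + t • Q₁) ρ ∧
      Integrable (fun ω => ρ ω * Real.log (ρ ω)) (sphMeasure d) ∧
      entropy d ρ ≤ (1 - t) * entropy d ρ₀ + t * entropy d ρ₁ := by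
  obtain ⟨hI₀, hpos₀, hone₀, hQ₀⟩ := h₀
  obtain ⟨hI₁, hpos₁, hone₁, hQ₁⟩ := h₁
  have hs : 0 ≤ 1 - t := by linarith
  set ρ : Sph d → ℝ := fun ω => (1 - t) * ρ₀ ω + t * ρ₁ ω with hρdef
  have hI : Integrable ρ (sphMeasure d) := (hI₀.const_mul _).add (hI₁.const_mul _)
  have hpos : ∀ ω, 0 ≤ ρ ω := fun ω => by
    have := hpos₀ ω; have := hpos₁ ω; positivity
  refine ⟨ρ, ⟨hI, hpos, ?_, ?_⟩, ?_⟩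
  · rw [integral_add (hI₀.const_mul _) (hI₁.const_mul _), integral_const_mul, integral_const_mul,
      hone₀, hone₁]
    ring
  · -- Qtensor linearity
    ext i j
    have hk₀ := BM_kernel_int d i j hI₀
    have hk₁ := BM_kernel_int d i j hI₁
    have hlin : Qtensor d ρ i j = (1 - t) * Qtensor d ρ₀ i j + t * Qtensor d ρ₁ i j := by
      unfold Qtensor
      simp only [Matrix.of_apply]
      have heq : (fun ω : Sph d =>
          ((ω : EuclideanSpace ℝ (Fin d)) i * (ω : EuclideanSpace ℝ (Fin d)) j
            - if i = j then (1 : ℝ) / d else 0) * ρ ω)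
          = fun ω : Sph d => (1 - t) * (((ω : EuclideanSpace ℝ (Fin d)) i * (ω : EuclideanSpace ℝ (Fin d)) j
            - if i = j then (1 : ℝ) / d else 0) * ρ₀ ω)
            + t * (((ω : EuclideanSpace ℝ (Fin d)) i * (ω : EuclideanSpace ℝ (Fin d)) j
            - if i = j then (1 : ℝ) / d else 0) * ρ₁ ω) := by
        funext ω; simp only [hρdef]; ring
      rw [heq, integral_add (hk₀.const_mul _) (hk₁.const_mul _), integral_const_mul,
        integral_const_mul]
    rw [hlin, hQ₀, hQ₁]
    simp [Matrix.add_apply, Matrix.smul_apply, smul_eq_mul]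
  · -- entropy
    have hub : ∀ ω, ρ ω * Real.log (ρ ω)
        ≤ (1 - t) * (ρ₀ ω * Real.log (ρ₀ ω)) + t * (ρ₁ ω * Real.log (ρ₁ ω)) := by
      intro ω
      have := Real.convexOn_mul_log.2 (Set.mem_Ici.2 (hpos₀ ω)) (Set.mem_Ici.2 (hpos₁ ω))
        hs ht0 (by ring)
      simpa [smul_eq_mul] using this
    have hgint : Integrable (fun ω => (1 - t) * (ρ₀ ω * Real.log (ρ₀ ω))
        + t * (ρ₁ ω * Real.log (ρ₁ ω))) (sphMeasure d) :=
      (hi₀.const_mul _).add (hi₁.const_mul _)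
    have hfmeas : AEStronglyMeasurable (fun ω => ρ ω * Real.log (ρ ω)) (sphMeasure d) :=
      Real.continuous_mul_log.comp_aestronglyMeasurable hI.aestronglyMeasurable
    have hfint : Integrable (fun ω => ρ ω * Real.log (ρ ω)) (sphMeasure d) := by
      apply Integrable.mono' (hgint.abs.add (integrable_const 1)) hfmeas
      apply ae_of_all
      intro ω
      simp only [Pi.add_apply]
      rw [Real.norm_eq_abs, abs_le]
      constructor
      · have h1 := BM_mul_log_lower (hpos ω)
        have h2 : (0:ℝ) ≤ |(1 - t) * (ρ₀ ω * Real.log (ρ₀ ω)) + t * (ρ₁ ω * Real.log (ρ₁ ω))| :=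
          abs_nonneg _
        linarith
      · calc ρ ω * Real.log (ρ ω)
            ≤ (1 - t) * (ρ₀ ω * Real.log (ρ₀ ω)) + t * (ρ₁ ω * Real.log (ρ₁ ω)) := hub ω
          _ ≤ |(1 - t) * (ρ₀ ω * Real.log (ρ₀ ω)) + t * (ρ₁ ω * Real.log (ρ₁ ω))| := le_abs_self _
          _ ≤ _ + 1 := by linarith
    refine ⟨hfint, ?_⟩
    unfold entropy
    calc (∫ ω, ρ ω * Real.log (ρ ω) ∂(sphMeasure d))
        ≤ ∫ ω, (1 - t) * (ρ₀ ω * Real.log (ρ₀ ω)) + t * (ρ₁ ω * Real.log (ρ₁ ω)) ∂(sphMeasure d) :=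
          integral_mono hfint hgint hub
      _ = _ := by
          rw [integral_add (hi₀.const_mul _) (hi₁.const_mul _), integral_const_mul,
            integral_const_mul]

lemma BM_le_coe_of_forall {a : EReal} {s : ℝ} (h : ∀ ε : ℝ, 0 < ε → a ≤ ((s + ε : ℝ) : EReal)) :
    a ≤ (s : EReal) := by
  induction a using EReal.rec with
  | bot => exact bot_le
  | coe y =>
      rw [EReal.coe_le_coe_iff]
      apply le_of_forall_pos_le_add
      intro ε hε
      exact EReal.coe_le_coe_iff.1 (h ε hε)
  | top =>
      exfalso
      have := h 1 one_pos
      exact (EReal.coe_lt_top _).not_ge this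

lemma BM_coe_mul_ne_bot (c : ℝ) (hc : 0 ≤ c) (a : EReal) (ha : a ≠ ⊥) :
    ((c : ℝ) : EReal) * a ≠ ⊥ := by
  rcases hc.eq_or_lt with h | h
  · rw [← h]; simp
  · induction a using EReal.rec with
    | bot => exact absurd rfl ha
    | coe y => rw [← EReal.coe_mul]; exact EReal.coe_ne_bot _
    | top =>
        rw [EReal.mul_top_of_pos (by exact_mod_cast h)]
        simp


/-- The Ball–Majumdar potential `ψ` is convex on `Sym₀(d)`:
`ψ((1-t)Q₀ + tQ₁) ≤ (1-t)ψ(Q₀) + tψ(Q₁)` in `ℝ ∪ {+∞}`, and in particular its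
effective domain `D(ψ) = {Q ∈ Sym₀(d) : ψ(Q) < ∞}` is a convex set. -/
theorem BMpsi_convex (d : ℕ) (hd : 2 ≤ d) :
    (∀ Q₀ Q₁ : Matrix (Fin d) (Fin d) ℝ, Q₀ᵀ = Q₀ → Q₀.trace = 0 → Q₁ᵀ = Q₁ → Q₁.trace = 0 →
      ∀ t : ℝ, t ∈ Set.Icc (0 : ℝ) 1 →
        BMpsi d ((1 - t) • Q₀ + t • Q₁)
          ≤ ((1 - t : ℝ) : EReal) * BMpsi d Q₀ + ((t : ℝ) : EReal) * BMpsi d Q₁) ∧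
    Convex ℝ { Q : Matrix (Fin d) (Fin d) ℝ | Qᵀ = Q ∧ Q.trace = 0 ∧ BMpsi d Q < ⊤ } := by
  have key : ∀ Q₀ Q₁ : Matrix (Fin d) (Fin d) ℝ, ∀ t : ℝ, 0 ≤ t → t ≤ 1 →
      BMpsi d ((1 - t) • Q₀ + t • Q₁)
        ≤ ((1 - t : ℝ) : EReal) * BMpsi d Q₀ + ((t : ℝ) : EReal) * BMpsi d Q₁ := by
    intro Q₀ Q₁ t ht0 ht1
    by_cases h0 : BMpsi d Q₀ = ⊤
    · rcases eq_or_lt_of_le ht1 with ht | ht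
      · subst ht
        have hQ : (1 - 1 : ℝ) • Q₀ + (1 : ℝ) • Q₁ = Q₁ := by simp
        rw [hQ, h0]
        have : ((1 - 1 : ℝ) : EReal) = 0 := by norm_num
        rw [this, zero_mul, zero_add]
        have : ((1 : ℝ) : EReal) = 1 := by norm_num
        rw [this, one_mul]
      · have hpos : (0 : EReal) < ((1 - t : ℝ) : EReal) := by
          rw [show (0 : EReal) = ((0 : ℝ) : EReal) by norm_num, EReal.coe_lt_coe_iff]; linarith
        rw [h0, EReal.mul_top_of_pos hpos]
        have hne : ((t : ℝ) : EReal) * BMpsi d Q₁ ≠ ⊥ :=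
          BM_coe_mul_ne_bot t ht0 _ (BMpsi_ne_bot d Q₁)
        rw [EReal.top_add_of_ne_bot hne]
        exact le_top
    · by_cases h1 : BMpsi d Q₁ = ⊤
      · rcases ht0.eq_or_lt with ht | ht
        · subst ht
          have hQ : (1 - 0 : ℝ) • Q₀ + (0 : ℝ) • Q₁ = Q₀ := by simp
          rw [hQ, h1]
          have e0 : ((0 : ℝ) : EReal) = 0 := by norm_num
          have e1 : ((1 - 0 : ℝ) : EReal) = 1 := by norm_num
          rw [e0, zero_mul, add_zero, e1, one_mul]
        · have hpos : (0 : EReal) < ((t : ℝ) : EReal) := by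
            rw [show (0 : EReal) = ((0 : ℝ) : EReal) by norm_num, EReal.coe_lt_coe_iff]; linarith
          rw [h1, EReal.mul_top_of_pos hpos]
          have hne : ((1 - t : ℝ) : EReal) * BMpsi d Q₀ ≠ ⊥ :=
            BM_coe_mul_ne_bot (1 - t) (by linarith) _ (BMpsi_ne_bot d Q₀)
          rw [EReal.add_top_of_ne_bot hne]
          exact le_top
      · -- both finite
        set r₀ := (BMpsi d Q₀).toReal with hr₀
        set r₁ := (BMpsi d Q₁).toReal with hr₁
        have hc₀ : ((r₀ : ℝ) : EReal) = BMpsi d Q₀ := EReal.coe_toReal h0 (BMpsi_ne_bot d Q₀)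
        have hc₁ : ((r₁ : ℝ) : EReal) = BMpsi d Q₁ := EReal.coe_toReal h1 (BMpsi_ne_bot d Q₁)
        rw [← hc₀, ← hc₁, ← EReal.coe_mul, ← EReal.coe_mul, ← EReal.coe_add]
        apply BM_le_coe_of_forall
        intro ε hε
        have hlt₀ : BMpsi d Q₀ < ((r₀ + ε : ℝ) : EReal) := by
          rw [← hc₀, EReal.coe_lt_coe_iff]; linarith
        have hlt₁ : BMpsi d Q₁ < ((r₁ + ε : ℝ) : EReal) := by
          rw [← hc₁, EReal.coe_lt_coe_iff]; linarith
        obtain ⟨x₀, hx₀S, hx₀lt⟩ := sInf_lt_iff.1 hlt₀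
        obtain ⟨x₁, hx₁S, hx₁lt⟩ := sInf_lt_iff.1 hlt₁
        obtain ⟨ρ₀, hρ₀, hi₀, rfl⟩ := hx₀S
        obtain ⟨ρ₁, hρ₁, hi₁, rfl⟩ := hx₁S
        rw [EReal.coe_lt_coe_iff] at hx₀lt hx₁lt
        obtain ⟨ρ, hρ, hiρ, hent⟩ := BM_mix d Q₀ Q₁ t ht0 ht1 ρ₀ ρ₁ hρ₀ hρ₁ hi₀ hi₁
        have hmem : ((entropy d ρ : ℝ) : EReal) ∈
            { x : EReal | ∃ ρ' : Sph d → ℝ, densityClass d ((1 - t) • Q₀ + t • Q₁) ρ' ∧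
              Integrable (fun ω => ρ' ω * Real.log (ρ' ω)) (sphMeasure d) ∧
              x = (entropy d ρ' : EReal) } := ⟨ρ, hρ, hiρ, rfl⟩
        calc BMpsi d ((1 - t) • Q₀ + t • Q₁) ≤ ((entropy d ρ : ℝ) : EReal) := sInf_le hmem
          _ ≤ (((1 - t) * r₀ + t * r₁ + ε : ℝ) : EReal) := by
              rw [EReal.coe_le_coe_iff]
              have e₀ : (1 - t) * entropy d ρ₀ ≤ (1 - t) * (r₀ + ε) :=
                mul_le_mul_of_nonneg_left hx₀lt.le (by linarith)
              have e₁ : t * entropy d ρ₁ ≤ t * (r₁ + ε) :=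
                mul_le_mul_of_nonneg_left hx₁lt.le ht0
              nlinarith [hent]
  constructor
  · intro Q₀ Q₁ _ _ _ _ t ht
    exact key Q₀ Q₁ t ht.1 ht.2
  · intro x hx y hy a b ha hb hab
    obtain ⟨hxT, hxtr, hxψ⟩ := hx
    obtain ⟨hyT, hytr, hyψ⟩ := hy
    have hab' : a = 1 - b := by linarith
    refine ⟨?_, ?_, ?_⟩
    · show (a • x + b • y)ᵀ = a • x + b • y
      rw [Matrix.transpose_add, Matrix.transpose_smul, Matrix.transpose_smul, hxT, hyT]
    · show (a • x + b • y).trace = 0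
      rw [Matrix.trace_add, Matrix.trace_smul, Matrix.trace_smul, hxtr, hytr]
      simp
    · show BMpsi d (a • x + b • y) < ⊤
      have hkey := key x y b hb (by linarith)
      rw [← hab'] at hkey
      apply lt_of_le_of_lt hkey
      have hcx : (((BMpsi d x).toReal : ℝ) : EReal) = BMpsi d x :=
        EReal.coe_toReal hxψ.ne (BMpsi_ne_bot d x)
      have hcy : (((BMpsi d y).toReal : ℝ) : EReal) = BMpsi d y :=
        EReal.coe_toReal hyψ.ne (BMpsi_ne_bot d y)
      rw [← hcx, ← hcy, hab', ← EReal.coe_mul, ← EReal.coe_mul, ← EReal.coe_add]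
      exact EReal.coe_lt_top _
end
end

section
/- Let d ≥ 2 and let φ : ℝ^{d×d} → ℝ be differentiable and invariant under rotations and transposition, i.e. φ(R X Rᵀ) = φ(X) for all X ∈ ℝ^{d×d} and all R ∈ SO(d), and φ(Xᵀ) = φ(X) for all X. Then for every symmetric matrix Q, the gradient ∇φ(Q) (the matrix representing the Fréchet derivative of φ at Q with respect to the Frobenius inner product) commutes with Q: Q ∇φ(Q) = ∇φ(Q) Q. -/
open Matrix

noncomputable section Linfty

attribute [local instance] Matrix.linftyOpNormedRing Matrix.linftyOpNormedAlgebra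

open NormedSpace

/-- entry evaluation as a continuous linear map (w.r.t. the `L∞` operator norm) -/
def entryCLM (d : ℕ) (i j : Fin d) : Matrix (Fin d) (Fin d) ℝ →L[ℝ] ℝ :=
  LinearMap.toContinuousLinearMap
    { toFun := fun M => M i j
      map_add' := fun _ _ => rfl
      map_smul' := fun _ _ => rfl }

/-- transposition as a continuous linear map (w.r.t. the `L∞` operator norm) -/
def transCLM (d : ℕ) : Matrix (Fin d) (Fin d) ℝ →L[ℝ] Matrix (Fin d) (Fin d) ℝ :=
  LinearMap.toContinuousLinearMap
    { toFun := fun M => Mᵀ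
      map_add' := fun _ _ => Matrix.transpose_add _ _
      map_smul' := fun _ _ => Matrix.transpose_smul _ _ }

/-- Existence of a rotation curve through the identity with prescribed skew velocity. -/
theorem key_exists (d : ℕ) (A Q : Matrix (Fin d) (Fin d) ℝ) (hA : Aᵀ = -A) :
    ∃ R : ℝ → Matrix (Fin d) (Fin d) ℝ,
      (∀ t, (R t)ᵀ * R t = 1) ∧ (∀ t, (R t).det = 1) ∧ R 0 = 1 ∧
      ∀ i j, HasDerivAt (fun t => (R t * Q * (R t)ᵀ) i j) ((A * Q + Q * Aᵀ) i j) 0 := by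
  have htr : ∀ t : ℝ, (exp (t • A))ᵀ = exp (-(t • A)) := by
    intro t
    rw [← Matrix.exp_transpose, transpose_smul, hA, smul_neg]
  have horth : ∀ t : ℝ, (exp (t • A))ᵀ * exp (t • A) = 1 := by
    intro t
    rw [htr, ← Matrix.exp_add_of_commute _ _ (Commute.neg_left (Commute.refl (t • A)))]
    simp [exp_zero]
  refine ⟨fun t => exp (t • A), horth, ?_, ?_, ?_⟩
  · -- determinant 1
    intro t
    have hcont : Continuous fun s : ℝ => (exp (s • A)).det := by
      refine Continuous.matrix_det ?_
      exact (Differentiable.continuous fun s => (hasDerivAt_exp_smul_const A s).differentiableAt :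
        Continuous fun s : ℝ => exp (s • A))
    have hsq : ∀ s : ℝ, (exp (s • A)).det * (exp (s • A)).det = 1 := by
      intro s
      have := congrArg Matrix.det (horth s)
      rwa [Matrix.det_mul, Matrix.det_transpose, Matrix.det_one] at this
    have h0 : (exp ((0:ℝ) • A)).det = 1 := by simp [exp_zero]
    by_contra hne
    have hneg : (exp (t • A)).det = -1 := by
      rcases mul_self_eq_one_iff.mp (hsq t) with h | h
      · exact absurd h hne
      · exact h
    have h0mem : (0:ℝ) ∈ Set.uIcc ((fun s : ℝ => (exp (s • A)).det) 0)
        ((fun s : ℝ => (exp (s • A)).det) t) := by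
      simp only [h0, hneg]
      rw [Set.uIcc_of_ge (by norm_num : (-1:ℝ) ≤ 1)]
      constructor <;> norm_num
    obtain ⟨s, _, hs⟩ := intermediate_value_uIcc (hcont.continuousOn) h0mem
    change (exp (s • A)).det = 0 at hs
    have := hsq s
    rw [hs] at this
    norm_num at this
  · simp [exp_zero]
  · intro i j
    have hc : HasDerivAt (fun t : ℝ => exp (t • A)) A 0 := by
      have := hasDerivAt_exp_smul_const (𝕂 := ℝ) A (0 : ℝ)
      rw [zero_smul, exp_zero, one_mul] at this
      exact this
    have hct : HasDerivAt (fun t : ℝ => (exp (t • A))ᵀ) Aᵀ 0 := by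
      have := (transCLM d).hasFDerivAt.comp_hasDerivAt 0 hc
      simp only [transCLM, LinearMap.coe_toContinuousLinearMap', LinearMap.coe_mk, AddHom.coe_mk] at this
      exact this
    have hprod : HasDerivAt (fun t : ℝ => exp (t • A) * Q * (exp (t • A))ᵀ)
        (A * Q + Q * Aᵀ) 0 := by
      have h1 : HasDerivAt (fun t : ℝ => exp (t • A) * Q) (A * Q) 0 := hc.mul_const Q
      have := h1.mul hct
      simp only [zero_smul, exp_zero, one_mul, mul_one, transpose_one] at this
      exact this
    have := (entryCLM d i j).hasFDerivAt.comp_hasDerivAt 0 hprod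
    simp only [entryCLM, LinearMap.coe_toContinuousLinearMap', LinearMap.coe_mk, AddHom.coe_mk] at this
    exact this

end Linfty

attribute [local instance] Matrix.normedAddCommGroup Matrix.normedSpace

noncomputable section

/-- Assemble a matrix-valued derivative from entrywise derivatives. -/
theorem hasDerivAt_matrix {d : ℕ} {f : ℝ → Matrix (Fin d) (Fin d) ℝ}
    {f' : Matrix (Fin d) (Fin d) ℝ} {t : ℝ}
    (h : ∀ i j, HasDerivAt (fun s => f s i j) (f' i j) t) : HasDerivAt f f' t := by
  have : HasFDerivAt f ((1 : ℝ →L[ℝ] ℝ).smulRight f') t := by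
    apply hasFDerivAt_pi''
    intro i
    apply hasFDerivAt_pi''
    intro j
    have := (h i j).hasFDerivAt
    exact this.congr_fderiv (by ext; simp; exact (one_smul ℝ (f' i j)).symm)
  exact this

/-- transposition as a continuous linear map (w.r.t. the entrywise sup norm) -/
def transCLM' (d : ℕ) : Matrix (Fin d) (Fin d) ℝ →L[ℝ] Matrix (Fin d) (Fin d) ℝ :=
  LinearMap.toContinuousLinearMap
    { toFun := fun M => Mᵀ
      map_add' := fun _ _ => Matrix.transpose_add _ _
      map_smul' := fun _ _ => Matrix.transpose_smul _ _ }

theorem matrix_eq_of_forall_trace {d : ℕ} (M N : Matrix (Fin d) (Fin d) ℝ)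
    (h : ∀ Y, (Mᵀ * Y).trace = (Nᵀ * Y).trace) : M = N := by
  ext i j
  have := h (Matrix.single i j 1)
  simpa [Matrix.trace, Matrix.diag, Matrix.mul_apply, Matrix.single, Matrix.of_apply,
    Finset.sum_ite_eq, Matrix.transpose_apply, ite_and] using this

theorem matrix_eq_zero_of_trace_transpose_mul_self {d : ℕ} (M : Matrix (Fin d) (Fin d) ℝ)
    (h : (Mᵀ * M).trace = 0) : M = 0 := by
  have h' : ∑ j, ∑ i, (M i j) ^ 2 = 0 := by
    simpa [Matrix.trace, Matrix.diag, Matrix.mul_apply, sq] using h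
  ext i j
  have h1 := (Finset.sum_eq_zero_iff_of_nonneg
    (fun j _ => Finset.sum_nonneg fun i _ => sq_nonneg (M i j))).mp h' j (Finset.mem_univ _)
  have h2 := (Finset.sum_eq_zero_iff_of_nonneg
    (fun i _ => sq_nonneg (M i j))).mp h1 i (Finset.mem_univ _)
  simpa using sq_eq_zero_iff.mp h2

/-- If `φ : ℝ^{d×d} → ℝ` is differentiable and invariant under rotations
(`φ(R X Rᵀ) = φ(X)` for `R ∈ SO(d)`) and transposition, then for every symmetric matrix `Q`
the Frobenius gradient `∇φ(Q)` (the matrix `G` with `Dφ(Q)[Y] = tr(Gᵀ Y)` for all `Y`)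
commutes with `Q`. -/
theorem gradient_commutes_of_isotropic (d : ℕ) (hd : 2 ≤ d)
    (φ : Matrix (Fin d) (Fin d) ℝ → ℝ) (hφ : Differentiable ℝ φ)
    (hrot : ∀ (X R : Matrix (Fin d) (Fin d) ℝ), Rᵀ * R = 1 → R.det = 1 →
      φ (R * X * Rᵀ) = φ X)
    (htrans : ∀ X : Matrix (Fin d) (Fin d) ℝ, φ Xᵀ = φ X)
    (Q G : Matrix (Fin d) (Fin d) ℝ) (hQ : Qᵀ = Q)
    (hG : ∀ Y : Matrix (Fin d) (Fin d) ℝ, fderiv ℝ φ Q Y = (Gᵀ * Y).trace) :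
    Q * G = G * Q := by
  -- Step 1: G is symmetric.
  have hGsym : G = Gᵀ := by
    have hcomp : HasFDerivAt φ ((fderiv ℝ φ Qᵀ).comp (transCLM' d)) Q := by
      have h1 : HasFDerivAt (fun X => φ ((transCLM' d) X))
          ((fderiv ℝ φ Qᵀ).comp (transCLM' d)) Q :=
        ((hφ Qᵀ).hasFDerivAt).comp Q ((transCLM' d).hasFDerivAt)
      have h2 : (fun X : Matrix (Fin d) (Fin d) ℝ => φ ((transCLM' d) X)) = φ := by
        funext X
        simpa [transCLM'] using htrans X
      rwa [h2] at h1
    have hfd : fderiv ℝ φ Q = (fderiv ℝ φ Q).comp (transCLM' d) := by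
      have := hcomp.fderiv
      rwa [hQ] at this
    have hYt : ∀ Y, fderiv ℝ φ Q Yᵀ = fderiv ℝ φ Q Y := by
      intro Y
      conv_rhs => rw [hfd]
      simp [transCLM']
    refine matrix_eq_of_forall_trace G Gᵀ fun Y => ?_
    have := hYt Y
    rw [hG, hG] at this
    calc (Gᵀ * Y).trace = (Gᵀ * Yᵀ).trace := this.symm
      _ = ((Gᵀ * Yᵀ)ᵀ).trace := (Matrix.trace_transpose _).symm
      _ = (Y * G).trace := by rw [Matrix.transpose_mul, Matrix.transpose_transpose,
            Matrix.transpose_transpose]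
      _ = (Gᵀᵀ * Y).trace := by rw [Matrix.transpose_transpose, Matrix.trace_mul_comm]
  -- Step 2: for every skew-symmetric A, the derivative along the rotation curve vanishes.
  have hskew : ∀ A : Matrix (Fin d) (Fin d) ℝ, Aᵀ = -A →
      (Gᵀ * (A * Q - Q * A)).trace = 0 := by
    intro A hA
    obtain ⟨R, hOrth, hDet, hR0, hDeriv⟩ := key_exists d A Q hA
    have hg : HasDerivAt (fun t => R t * Q * (R t)ᵀ) (A * Q + Q * Aᵀ) 0 :=
      hasDerivAt_matrix fun i j => hDeriv i j
    have h0 : R 0 * Q * (R 0)ᵀ = Q := by simp [hR0]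
    have hcomp : HasDerivAt (fun t => φ (R t * Q * (R t)ᵀ))
        (fderiv ℝ φ Q (A * Q + Q * Aᵀ)) 0 := by
      have hf : HasFDerivAt φ (fderiv ℝ φ Q) (R 0 * Q * (R 0)ᵀ) := by
        rw [h0]; exact (hφ Q).hasFDerivAt
      exact hf.comp_hasDerivAt 0 hg
    have hconst : (fun t => φ (R t * Q * (R t)ᵀ)) = fun _ => φ Q :=
      funext fun t => hrot Q (R t) (hOrth t) (hDet t)
    have hzero : fderiv ℝ φ Q (A * Q + Q * Aᵀ) = 0 := by
      have hc : HasDerivAt (fun t => φ (R t * Q * (R t)ᵀ)) 0 0 := by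
        rw [hconst]; exact hasDerivAt_const 0 (φ Q)
      exact hcomp.unique hc
    have hrw : A * Q + Q * Aᵀ = A * Q - Q * A := by
      rw [hA, mul_neg, ← sub_eq_add_neg]
    rw [hrw, hG] at hzero
    exact hzero
  -- Step 3: conclude.
  set M : Matrix (Fin d) (Fin d) ℝ := Q * G - G * Q with hMdef
  have hMskew : Mᵀ = -M := by
    rw [hMdef, Matrix.transpose_sub, Matrix.transpose_mul, Matrix.transpose_mul, hQ, ← hGsym,
      neg_sub]
  have h0 := hskew M hMskew
  have hMM : (Gᵀ * (M * Q - Q * M)).trace = (M * M).trace := by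
    rw [mul_sub, Matrix.trace_sub, ← mul_assoc, ← mul_assoc,
      Matrix.trace_mul_cycle (Gᵀ) M Q, ← Matrix.trace_sub, ← Matrix.sub_mul]
    congr 1
    rw [← hGsym, ← hMdef]
  have hMM0 : (M * M).trace = 0 := by rw [← hMM]; exact h0
  have hMt : (Mᵀ * M).trace = 0 := by
    rw [hMskew, Matrix.neg_mul, Matrix.trace_neg, hMM0, neg_zero]
  have hM0 : M = 0 := matrix_eq_zero_of_trace_transpose_mul_self M hMt
  have hsub : Q * G - G * Q = 0 := by rw [← hMdef]; exact hM0
  exact sub_eq_zero.mp hsub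
end
end

section
/- Let d ∈ {2,3} and Γ, L, θ, κ > 0. Let ψ : ℝ^{d×d} → ℝ be twice continuously differentiable and convex, such that for every Q ∈ Sym₀(d) the Frobenius gradient ∇ψ(Q) is symmetric and commutes with Q. Let T > 0, let u : ℝᵈ × (0,T) → ℝᵈ be smooth and divergence-free, let W := ((∇u) − (∇u)ᵀ)/2 denote the skew part of the velocity gradient, and let Q : ℝᵈ × (0,T) → Sym₀(d) be smooth and satisfy pointwise the co-rotational equation ∂_t Q + (u·∇)Q − (WQ − QW) = Γ( L ΔQ − θ⟨∇ψ(Q)⟩ + κ Q ). Then pointwise on ℝᵈ × (0,T) one has the parabolic inequality ∂_t[ψ(Q)] + (u·∇)[ψ(Q)] − Γ L Δ[ψ(Q)] ≤ (Γκ²/(2θ)) tr[Q²]. -/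
open Matrix MeasureTheory

attribute [local instance] Matrix.normedAddCommGroup Matrix.normedSpace

noncomputable section

/-- Space-time `ℝ^d × ℝ` (a point is `(x, t)`). -/
abbrev SpTime (d : ℕ) := (Fin d → ℝ) × ℝ

/-- The `j`-th spatial direction in space-time. -/
def sdir (d : ℕ) (j : Fin d) : SpTime d := (Pi.single j 1, 0)

/-- The time direction in space-time. -/
def tdir (d : ℕ) : SpTime d := (0, 1)

/-- Spatial partial derivative `∂_j` of a space-time map. -/
noncomputable def spd {d : ℕ} {M : Type*} [NormedAddCommGroup M] [NormedSpace ℝ M]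
    (j : Fin d) (F : SpTime d → M) (z : SpTime d) : M :=
  fderiv ℝ F z (sdir d j)

/-- Time derivative `∂_t` of a space-time map. -/
noncomputable def tpd {d : ℕ} {M : Type*} [NormedAddCommGroup M] [NormedSpace ℝ M]
    (F : SpTime d → M) (z : SpTime d) : M :=
  fderiv ℝ F z (tdir d)

/-- Spatial Laplacian `Δ = Σ_m ∂_m ∂_m` of a space-time map. -/
noncomputable def slap {d : ℕ} {M : Type*} [NormedAddCommGroup M] [NormedSpace ℝ M]
    (F : SpTime d → M) (z : SpTime d) : M :=
  ∑ m : Fin d, spd m (spd m F) z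

/-- The velocity gradient matrix, `(∇u)_{ij} = ∂_j u_i`. -/
noncomputable def gradVel {d : ℕ} (u : SpTime d → (Fin d → ℝ)) (z : SpTime d) :
    Matrix (Fin d) (Fin d) ℝ :=
  Matrix.of fun i j => spd j u z i

/-- The skew-symmetric part `D₀ = ((∇u) - (∇u)ᵀ)/2` of the velocity gradient. -/
noncomputable def skewPart {d : ℕ} (u : SpTime d → (Fin d → ℝ)) (z : SpTime d) :
    Matrix (Fin d) (Fin d) ℝ :=
  ((1 : ℝ) / 2) • (gradVel u z - (gradVel u z)ᵀ)

/-- The symmetric part `D = ((∇u) + (∇u)ᵀ)/2` of the velocity gradient. -/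
noncomputable def symPart {d : ℕ} (u : SpTime d → (Fin d → ℝ)) (z : SpTime d) :
    Matrix (Fin d) (Fin d) ℝ :=
  ((1 : ℝ) / 2) • (gradVel u z + (gradVel u z)ᵀ)

/-- The trace-free part `⟨A⟩ = A - (tr[A]/d) I` of a matrix. -/
noncomputable def tfree {d : ℕ} (A : Matrix (Fin d) (Fin d) ℝ) : Matrix (Fin d) (Fin d) ℝ :=
  A - (A.trace / (d : ℝ)) • (1 : Matrix (Fin d) (Fin d) ℝ)

section Helpers

lemma monotone_hasDerivAt_nonneg {g : ℝ → ℝ} (hm : Monotone g) {x y : ℝ}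
    (h : HasDerivAt g y x) : 0 ≤ y := by
  have h' := (h.hasDerivWithinAt (s := Set.Ioi x))
  rw [hasDerivWithinAt_iff_tendsto_slope] at h'
  have hset : Set.Ioi x \ {x} = Set.Ioi x := Set.diff_singleton_eq_self (by simp)
  rw [hset] at h'
  refine ge_of_tendsto h' ?_
  filter_upwards [self_mem_nhdsWithin] with z hz
  have hxz : x < z := hz
  have : 0 ≤ (g z - g x) / (z - x) :=
    div_nonneg (sub_nonneg.2 (hm hxz.le)) (sub_nonneg.2 hxz.le)
  simpa [slope_def_field] using this

lemma convex_second_nonneg {E : Type*} [NormedAddCommGroup E] [NormedSpace ℝ E]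
    {ψ : E → ℝ} (hψ : ContDiff ℝ 2 ψ) (hconv : ConvexOn ℝ Set.univ ψ) (X V : E) :
    0 ≤ fderiv ℝ (fderiv ℝ ψ) X V V := by
  set c : ℝ → E := fun s => X + s • V with hc
  have hcd : ∀ s : ℝ, HasDerivAt c V s := fun s => by
    simpa [hc] using ((hasDerivAt_id s).smul_const V).const_add X
  have hψd : Differentiable ℝ ψ := hψ.differentiable two_ne_zero
  have hφ' : ∀ s, HasDerivAt (fun s => ψ (c s)) (fderiv ℝ ψ (c s) V) s := fun s =>
    (hψd (c s)).hasFDerivAt.comp_hasDerivAt s (hcd s)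
  have hφconv : ConvexOn ℝ Set.univ (fun s => ψ (c s)) := by
    have : ConvexOn ℝ (AffineMap.lineMap X (X + V) ⁻¹' Set.univ) (ψ ∘ AffineMap.lineMap X (X + V)) :=
      hconv.comp_affineMap (AffineMap.lineMap X (X + V))
    refine ConvexOn.congr this fun s _ => ?_
    simp [AffineMap.lineMap_apply, hc, add_comm]
  have hmono : Monotone (fun s => fderiv ℝ ψ (c s) V) := by
    have hmOn := hφconv.monotoneOn_deriv (fun s _ => ((hψd (c s)).comp s (hcd s).differentiableAt))
    have hderiv : deriv (fun s => ψ (c s)) = fun s => fderiv ℝ ψ (c s) V :=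
      funext fun s => (hφ' s).deriv
    rw [hderiv] at hmOn
    exact fun a b hab => hmOn trivial trivial hab
  have hf2 : ContDiff ℝ 1 (fderiv ℝ ψ) := hψ.fderiv_right (by norm_num)
  have hD2 : HasFDerivAt (fderiv ℝ ψ) (fderiv ℝ (fderiv ℝ ψ) X) X :=
    (hf2.differentiable one_ne_zero X).hasFDerivAt
  have h1 : HasDerivAt (fun s => fderiv ℝ ψ (c s)) (fderiv ℝ (fderiv ℝ ψ) X V) 0 := by
    have hc0 : c 0 = X := by simp [hc]
    rw [← hc0] at hD2
    exact hc0 ▸ (hD2.comp_hasDerivAt (x := 0) (hcd 0))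
  have hgd : HasDerivAt (fun s => fderiv ℝ ψ (c s) V) (fderiv ℝ (fderiv ℝ ψ) X V V) 0 :=
    (ContinuousLinearMap.apply ℝ ℝ V).hasFDerivAt.comp_hasDerivAt 0 h1
  exact monotone_hasDerivAt_nonneg hmono hgd

variable {d : ℕ} {ψ : Matrix (Fin d) (Fin d) ℝ → ℝ} {Q : SpTime d → Matrix (Fin d) (Fin d) ℝ}

lemma fderiv_psi_comp (hψ : ContDiff ℝ 2 ψ) (hQ : ContDiff ℝ (⊤ : ℕ∞) Q)
    (z v : SpTime d) :
    fderiv ℝ (fun w => ψ (Q w)) z v = fderiv ℝ ψ (Q z) (fderiv ℝ Q z v) := by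
  rw [show (fun w => ψ (Q w)) = ψ ∘ Q from rfl,
    fderiv_comp z (hψ.differentiable two_ne_zero (Q z))
      (hQ.differentiable (by simp) z)]
  rfl

lemma spd_Q_contDiff (hQ : ContDiff ℝ (⊤ : ℕ∞) Q) (m : Fin d) :
    ContDiff ℝ (⊤ : ℕ∞) (spd m Q) :=
  (hQ.fderiv_right (by simp)).clm_apply contDiff_const

lemma spd2_comp (hψ : ContDiff ℝ 2 ψ) (hQ : ContDiff ℝ (⊤ : ℕ∞) Q) (m : Fin d)
    (z : SpTime d) :
    spd m (spd m (fun w => ψ (Q w))) z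
      = fderiv ℝ (fderiv ℝ ψ) (Q z) (spd m Q z) (spd m Q z)
        + fderiv ℝ ψ (Q z) (spd m (spd m Q) z) := by
  have hrw : spd m (fun w => ψ (Q w)) = fun w => (fderiv ℝ ψ (Q w)) (spd m Q w) :=
    funext fun w => fderiv_psi_comp hψ hQ w (sdir d m)
  have hf2 := hψ.fderiv_right (m := 1) (by norm_num)
  have hcdiff : DifferentiableAt ℝ (fun w => fderiv ℝ ψ (Q w)) z :=
    (hf2.differentiable one_ne_zero (Q z)).comp z (hQ.differentiable (by simp) z)
  have hUdiff : DifferentiableAt ℝ (spd m Q) z :=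
    (spd_Q_contDiff hQ m).differentiable (by simp) z
  have hc : fderiv ℝ (fun w => fderiv ℝ ψ (Q w)) z
      = (fderiv ℝ (fderiv ℝ ψ) (Q z)).comp (fderiv ℝ Q z) := by
    erw [show (fun w => fderiv ℝ ψ (Q w)) = (fderiv ℝ ψ) ∘ Q from rfl,
      fderiv_comp z (hf2.differentiable one_ne_zero (Q z))
        (hQ.differentiable (by simp) z)]
    rfl
  rw [show spd m (spd m (fun w => ψ (Q w))) z
      = fderiv ℝ (spd m (fun w => ψ (Q w))) z (sdir d m) from rfl, hrw]
  erw [fderiv_clm_apply hcdiff hUdiff]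
  simp only [ContinuousLinearMap.add_apply, ContinuousLinearMap.coe_comp',
    Function.comp_apply, ContinuousLinearMap.flip_apply, hc, ContinuousLinearMap.comp_apply]
  erw [hc]
  rw [add_comm]
  rfl

end Helpers

/-- If the smooth `Sym₀(d)`-valued field `Q` satisfies the co-rotational
equation `∂_t Q + (u·∇)Q − (WQ − QW) = Γ(LΔQ − θ⟨∇ψ(Q)⟩ + κQ)` on `ℝ^d × (0,T)`, where
`ψ` is `C²` and convex with Frobenius gradient `∇ψ` symmetric and commuting with `Q` on
`Sym₀(d)`, and `u` is smooth and divergence-free, then pointwise on `ℝ^d × (0,T)`,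
`∂_t[ψ(Q)] + (u·∇)[ψ(Q)] − ΓLΔ[ψ(Q)] ≤ (Γκ²/(2θ)) tr[Q²]`. -/

theorem corotational_parabolic_inequality (d : ℕ) (hd : d = 2 ∨ d = 3)
    (Γ L θ κ : ℝ) (hΓ : 0 < Γ) (hL : 0 < L) (hθ : 0 < θ) (hκ : 0 < κ)
    (ψ : Matrix (Fin d) (Fin d) ℝ → ℝ) (hψ : ContDiff ℝ 2 ψ)
    (hconv : ConvexOn ℝ Set.univ ψ)
    (gradψ : Matrix (Fin d) (Fin d) ℝ → Matrix (Fin d) (Fin d) ℝ)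
    (hgrad : ∀ X Y : Matrix (Fin d) (Fin d) ℝ, fderiv ℝ ψ X Y = ((gradψ X)ᵀ * Y).trace)
    (hgradQ : ∀ Q : Matrix (Fin d) (Fin d) ℝ, Qᵀ = Q → Q.trace = 0 →
      (gradψ Q)ᵀ = gradψ Q ∧ Q * gradψ Q = gradψ Q * Q)
    (T : ℝ) (hT : 0 < T)
    (u : SpTime d → (Fin d → ℝ)) (hu : ContDiff ℝ (⊤ : ℕ∞) u)
    (hdiv : ∀ z, ∑ i : Fin d, spd i u z i = 0)
    (Q : SpTime d → Matrix (Fin d) (Fin d) ℝ) (hQ : ContDiff ℝ (⊤ : ℕ∞) Q)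
    (hQsym : ∀ z, (Q z)ᵀ = Q z) (hQtr : ∀ z, (Q z).trace = 0)
    (heq : ∀ (x : Fin d → ℝ), ∀ t ∈ Set.Ioo (0 : ℝ) T,
      tpd Q (x, t) + (∑ i : Fin d, u (x, t) i • spd i Q (x, t))
          - (skewPart u (x, t) * Q (x, t) - Q (x, t) * skewPart u (x, t))
        = Γ • (L • slap Q (x, t) - θ • tfree (gradψ (Q (x, t))) + κ • Q (x, t))) :
    ∀ (x : Fin d → ℝ), ∀ t ∈ Set.Ioo (0 : ℝ) T,
      tpd (fun z => ψ (Q z)) (x, t)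
          + (∑ i : Fin d, u (x, t) i * spd i (fun z => ψ (Q z)) (x, t))
          - Γ * L * slap (fun z => ψ (Q z)) (x, t)
        ≤ Γ * κ ^ 2 / (2 * θ) * (Q (x, t) * Q (x, t)).trace := by
  intro x t ht
  obtain ⟨hGs, hGc⟩ := hgradQ (Q (x, t)) (hQsym (x, t)) (hQtr (x, t))
  set G : Matrix (Fin d) (Fin d) ℝ := gradψ (Q (x, t)) with hGdef
  set A : Matrix (Fin d) (Fin d) ℝ := tfree G with hAdef
  set f : Matrix (Fin d) (Fin d) ℝ → ℝ := fun X => (Gᵀ * X).trace with hfdef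
  have hfd : ∀ Y, fderiv ℝ ψ (Q (x, t)) Y = f Y := fun Y => hgrad _ Y
  have hf_add : ∀ X Y, f (X + Y) = f X + f Y := by
    intro X Y; simp [hfdef, Matrix.mul_add]
  have hf_sub : ∀ X Y, f (X - Y) = f X - f Y := by
    intro X Y; simp [hfdef, Matrix.mul_sub]
  have hf_smul : ∀ (a : ℝ) X, f (a • X) = a * f X := by
    intro a X; simp [hfdef, Matrix.mul_smul]
  have hf_sum : ∀ (g : Fin d → Matrix (Fin d) (Fin d) ℝ),
      f (∑ m, g m) = ∑ m, f (g m) := by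
    intro g; simp [hfdef, Matrix.mul_sum]
  -- chain rule identities
  have hA1 : tpd (fun w => ψ (Q w)) (x, t) = f (tpd Q (x, t)) := by
    rw [tpd, fderiv_psi_comp hψ hQ]; exact hfd _
  have hB1 : ∀ i : Fin d, spd i (fun w => ψ (Q w)) (x, t) = f (spd i Q (x, t)) := by
    intro i; rw [spd, fderiv_psi_comp hψ hQ]; exact hfd _
  set H : Fin d → ℝ :=
    fun m => fderiv ℝ (fderiv ℝ ψ) (Q (x, t)) (spd m Q (x, t)) (spd m Q (x, t)) with hHdef
  have hHnn : 0 ≤ ∑ m, H m :=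
    Finset.sum_nonneg fun m _ => convex_second_nonneg hψ hconv _ _
  have hC1 : slap (fun w => ψ (Q w)) (x, t) = (∑ m, H m) + f (slap Q (x, t)) := by
    rw [slap]
    calc (∑ m, spd m (spd m fun w => ψ (Q w)) (x, t))
        = ∑ m, (H m + f (spd m (spd m Q) (x, t))) :=
          Finset.sum_congr rfl fun m _ => by rw [spd2_comp hψ hQ, hfd]
      _ = (∑ m, H m) + f (slap Q (x, t)) := by
          rw [Finset.sum_add_distrib, slap, hf_sum]
  -- the equation, rearranged
  have hM : tpd Q (x, t) + (∑ i, u (x, t) i • spd i Q (x, t)) - (Γ * L) • slap Q (x, t)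
      = (skewPart u (x, t) * Q (x, t) - Q (x, t) * skewPart u (x, t))
        - (Γ * θ) • A + (Γ * κ) • Q (x, t) := by
    have h := heq x t ht
    rw [sub_eq_iff_eq_add] at h
    rw [h]
    module
  -- trace identities
  have hd0 : (d : ℝ) ≠ 0 := by rcases hd with h | h <;> simp [h]
  have htrA : A.trace = 0 := by
    simp [hAdef, tfree, Matrix.trace_sub, Matrix.trace_smul, Matrix.trace_one,
      div_mul_cancel₀ _ hd0]
  have hGA : G = A + (G.trace / (d : ℝ)) • 1 := by
    simp [hAdef, tfree]
  have hfW : f (skewPart u (x, t) * Q (x, t) - Q (x, t) * skewPart u (x, t)) = 0 := by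
    rw [hf_sub]
    have : (Gᵀ * (Q (x, t) * skewPart u (x, t))).trace
        = (Gᵀ * (skewPart u (x, t) * Q (x, t))).trace := by
      rw [hGs]
      calc (G * (Q (x, t) * skewPart u (x, t))).trace
          = ((G * Q (x, t)) * skewPart u (x, t)).trace := by rw [mul_assoc]
        _ = ((Q (x, t) * G) * skewPart u (x, t)).trace := by rw [hGc]
        _ = (Q (x, t) * (G * skewPart u (x, t))).trace := by rw [mul_assoc]
        _ = ((G * skewPart u (x, t)) * Q (x, t)).trace := Matrix.trace_mul_comm _ _
        _ = (G * (skewPart u (x, t) * Q (x, t))).trace := by rw [mul_assoc]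
    simp only [hfdef]
    rw [this]
    ring
  have hfA : f A = (A * A).trace := by
    simp only [hfdef]
    rw [hGs, hGA]
    simp [Matrix.add_mul, Matrix.smul_mul, Matrix.trace_add, Matrix.trace_smul, htrA]
  have hfQ : f (Q (x, t)) = (A * Q (x, t)).trace := by
    simp only [hfdef]
    rw [hGs, hGA]
    simp [Matrix.add_mul, Matrix.smul_mul, Matrix.trace_add, Matrix.trace_smul, hQtr (x, t)]
  -- assemble the left-hand side
  have hLHS : tpd (fun z => ψ (Q z)) (x, t)
      + (∑ i : Fin d, u (x, t) i * spd i (fun z => ψ (Q z)) (x, t))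
      - Γ * L * slap (fun z => ψ (Q z)) (x, t)
      = Γ * κ * (A * Q (x, t)).trace - Γ * θ * (A * A).trace - Γ * L * (∑ m, H m) := by
    rw [hA1, hC1]
    rw [Finset.sum_congr rfl fun i _ => by rw [hB1 i]]
    have hsum : (∑ i : Fin d, u (x, t) i * f (spd i Q (x, t)))
        = f (∑ i, u (x, t) i • spd i Q (x, t)) := by
      rw [hf_sum]
      exact Finset.sum_congr rfl fun i _ => (hf_smul _ _).symm
    have hfM := congrArg f hM
    simp only [hf_sub, hf_add, hf_smul] at hfM
    rw [hfA, hfQ] at hfM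
    rw [hf_sub] at hfW
    rw [hsum, mul_add]
    linarith [hfM, hfW]
  -- symmetry facts
  have hAs : Aᵀ = A := by
    simp [hAdef, tfree, Matrix.transpose_sub, Matrix.transpose_smul, hGs]
  have htr2 : ∀ B C : Matrix (Fin d) (Fin d) ℝ,
      (B * C).trace = ∑ i, ∑ j, B i j * C j i := by
    intro B C; simp [Matrix.trace, Matrix.diag, Matrix.mul_apply]
  have key : ∀ a q : ℝ, Γ * κ * (a * q) - Γ * θ * (a * a) ≤ Γ * κ ^ 2 / (2 * θ) * (q * q) := by
    intro a q
    have h2θ : (0 : ℝ) < 2 * θ := by linarith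
    rw [div_mul_eq_mul_div, le_div_iff₀ h2θ]
    nlinarith [mul_nonneg hΓ.le (sq_nonneg (2 * θ * a - κ * q)),
      mul_nonneg (mul_nonneg hΓ.le (sq_nonneg κ)) (sq_nonneg q)]
  have hfinal : Γ * κ * (A * Q (x, t)).trace - Γ * θ * (A * A).trace
      ≤ Γ * κ ^ 2 / (2 * θ) * (Q (x, t) * Q (x, t)).trace := by
    rw [htr2 A (Q (x, t)), htr2 A A, htr2 (Q (x, t)) (Q (x, t))]
    rw [Finset.mul_sum, Finset.mul_sum, Finset.mul_sum, ← Finset.sum_sub_distrib]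
    refine Finset.sum_le_sum fun i _ => ?_
    rw [Finset.mul_sum, Finset.mul_sum, Finset.mul_sum, ← Finset.sum_sub_distrib]
    refine Finset.sum_le_sum fun j _ => ?_
    have hA' : A j i = A i j := by
      have := congrFun (congrFun hAs i) j
      simpa [Matrix.transpose_apply] using this
    have hQ' : Q (x, t) i j = Q (x, t) j i := by
      have := congrFun (congrFun (hQsym (x, t)) j) i
      simpa [Matrix.transpose_apply] using this
    rw [hA', hQ']
    exact key (A i j) (Q (x, t) j i)
  rw [hLHS]
  have : 0 ≤ Γ * L * (∑ m, H m) := by positivity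
  linarith [hfinal]
end
end
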